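/- Let G be a bipartite graph with vertex parts B (bits) and C (checks), where every vertex in B has degree s ≥ 2, every vertex in C has degree w, and G has girth greater than 2d̃. Then the parity check matrix M defined by G (rows indexed by C, columns by B, with M_{c,b} = 1 iff c is adjacent to b) is (d̃, s)-sensitive: every nonzero vector v ∈ F_2^B with |v| ≤ d̃ satisfies |Mv| ≥ s. -/

import Mathlib

open Matrix

/-- The bipartite (Tanner) graph on `B ⊕ C` determined by an adjacency
relation `adj : C → B → Prop` between checks and bits. -/
def tannerGraph {B C : Type*} (adj : C → B → Prop) : SimpleGraph (B ⊕ C) where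
  Adj x y :=
    match x, y with
    | Sum.inl b, Sum.inr c => adj c b
    | Sum.inr c, Sum.inl b => adj c b
    | _, _ => False
  symm := by
    constructor
    intro x y h
    cases x <;> cases y <;> simp_all
  loopless := by
    constructor
    intro x h
    cases x <;> simp_all

section Aux

open Finset SimpleGraph

lemma stmt8_forest_bound {α : Type*} [Fintype α] [DecidableEq α] (G : SimpleGraph α)
    [DecidableRel G.Adj] (hG : G.IsAcyclic) (hne : G.edgeFinset.Nonempty) :
    G.edgeFinset.card + 1 ≤ (Finset.univ.filter (fun x => ∃ y, G.Adj x y)).card := by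
  classical
  set root : α → α := fun x => (G.connectedComponentMk x).out with hrootdef
  have hreach : ∀ x, G.Reachable x (root x) := by
    intro x
    have h : G.connectedComponentMk (root x) = G.connectedComponentMk x := Quot.out_eq _
    exact (SimpleGraph.ConnectedComponent.eq.mp h).symm
  have hrootroot : ∀ x, root (root x) = root x := fun x => congrArg Quot.out (Quot.out_eq _)
  have hP : ∀ x, ∃ p : G.Walk x (root x), p.IsPath :=
    fun x => (hreach x).elim fun w => ⟨w.toPath.1, w.toPath.2⟩
  choose P hPp using hP
  have huniq : ∀ {a b : α} (q r : G.Walk a b), q.IsPath → r.IsPath → q = r :=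
    fun q r hq hr => by simpa using congrArg Subtype.val (hG.path_unique ⟨q, hq⟩ ⟨r, hr⟩)
  have hrooteq : ∀ {x y}, G.Adj x y → root x = root y :=
    fun {x y} h => congrArg Quot.out (Quot.sound h.reachable)
  have hstart : ∀ x, (P x).length ≠ 0 → x ≠ root x := by
    intro x hlen heq
    have hq : ((P x).copy rfl heq.symm).IsPath := (Walk.isPath_copy _ _ _).mpr (hPp x)
    rw [Walk.isPath_iff_eq_nil] at hq
    have := congrArg Walk.length hq
    simp at this
    exact hlen (Walk.nil_iff_length_eq.mp this)
  have key : ∀ {x y}, G.Adj x y →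
      ∃ z, (P z).length ≠ 0 ∧ s(z, (P z).getVert 1) = s(x, y) ∧ (∃ u, G.Adj z u) := by
    intro x y hxy
    by_cases hy : y ∈ (P x).support
    · have ht : (P x).takeUntil y hy = Walk.cons hxy Walk.nil := by
        apply huniq _ _ ((hPp x).takeUntil hy)
        simp [hxy.ne]
      have hPx : P x = Walk.cons hxy ((P x).dropUntil y hy) := by
        conv_lhs => rw [← Walk.take_spec (P x) hy]
        rw [ht]
        simp
      refine ⟨x, ?_, ?_, ⟨y, hxy⟩⟩
      · rw [hPx]; simp
      · rw [hPx]; simp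
    · have hr : root x = root y := hrooteq hxy
      have hq : (Walk.cons hxy.symm ((P x).copy rfl hr)).IsPath := by
        rw [Walk.cons_isPath_iff]
        exact ⟨(Walk.isPath_copy _ _ _).mpr (hPp x), by simpa using hy⟩
      have hPy : P y = Walk.cons hxy.symm ((P x).copy rfl hr) := huniq _ _ (hPp y) hq
      refine ⟨y, ?_, ?_, ⟨x, hxy.symm⟩⟩
      · rw [hPy]; simp
      · rw [hPy]
        simp [Sym2.eq_swap]
  set T := Finset.univ.filter (fun z : α => (∃ u, G.Adj z u) ∧ z ≠ root z) with hT
  have hsurj : Set.SurjOn (fun z => s(z, (P z).getVert 1)) (T : Set α)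
      (G.edgeFinset : Set (Sym2 α)) := by
    intro e he
    induction e with
    | _ x y =>
      rw [Finset.mem_coe, mem_edgeFinset, mem_edgeSet] at he
      obtain ⟨z, hz1, hz2, hz3⟩ := key he
      exact ⟨z, by simp [hT, hz3, hstart z hz1], hz2⟩
  have h1 : G.edgeFinset.card ≤ T.card := Finset.card_le_card_of_surjOn _ hsurj
  obtain ⟨e0, he0⟩ := hne
  have hxy0 : ∃ x y, G.Adj x y := by
    induction e0 with
    | _ x y =>
      rw [mem_edgeFinset, mem_edgeSet] at he0
      exact ⟨x, y, he0⟩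
  obtain ⟨x0, y0, hxy0⟩ := hxy0
  set r0 := root x0 with hr0
  have hr0fix : root r0 = r0 := hrootroot x0
  have hr0adj : ∃ u, G.Adj r0 u := by
    by_cases h0 : (P x0).length = 0
    · have hx0 : x0 = root x0 := by
        have h1' := (P x0).getVert_zero
        have h2' := (P x0).getVert_of_length_le (i := 0) (Nat.le_of_eq h0)
        rw [h1'] at h2'
        exact h2'
      exact ⟨y0, by rw [hr0, ← hx0]; exact hxy0⟩
    · have hlt : (P x0).length - 1 < (P x0).length := by omega
      have hadj := (P x0).adj_getVert_succ hlt
      have hsucc : (P x0).length - 1 + 1 = (P x0).length := by omega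
      rw [hsucc, Walk.getVert_length] at hadj
      exact ⟨_, hadj.symm⟩
  have hr0mem : r0 ∈ Finset.univ.filter (fun x => ∃ y, G.Adj x y) := by
    simp only [Finset.mem_filter, Finset.mem_univ, true_and]
    exact hr0adj
  have hsub : T ⊆ (Finset.univ.filter (fun x => ∃ y, G.Adj x y)).erase r0 := by
    intro z hz
    rw [hT, Finset.mem_filter] at hz
    rw [Finset.mem_erase]
    refine ⟨fun h => hz.2.2 ?_,
      by simp only [Finset.mem_filter, Finset.mem_univ, true_and]; exact hz.2.1⟩
    rw [h]; exact hr0fix.symm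
  have h2 := Finset.card_le_card hsub
  rw [Finset.card_erase_of_mem hr0mem] at h2
  have h3 : 1 ≤ (Finset.univ.filter (fun x => ∃ y, G.Adj x y)).card :=
    Finset.card_pos.mpr ⟨r0, hr0mem⟩
  omega

lemma stmt8_getVert_support {α : Type*} {G : SimpleGraph α} {u v : α} (p : G.Walk u v) :
    ∀ i : ℕ, i ≤ p.length → p.support[i]? = some (p.getVert i) := by
  induction p with
  | nil =>
    intro i hi
    have hi0 : i = 0 := by simpa using hi
    subst hi0
    simp
  | cons h q ih =>
    intro i hi
    cases i with
    | zero => simp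
    | succ j =>
      rw [Walk.support_cons]
      simp only [List.getElem?_cons_succ, Walk.getVert_cons_succ]
      exact ih j (by simpa using hi)

lemma stmt8_cycle_getVert_inj {α : Type*} {G : SimpleGraph α} {u : α} {w : G.Walk u u}
    (hw : w.IsCycle) {i j : ℕ} (hi1 : 1 ≤ i) (hi2 : i ≤ w.length) (hj1 : 1 ≤ j)
    (hj2 : j ≤ w.length) (h : w.getVert i = w.getVert j) : i = j := by
  have hnd : w.support.tail.Nodup := hw.2
  have hlen : w.support.tail.length = w.length := by
    simp [Walk.length_support]
  have h1 : w.support.tail[i - 1]? = some (w.getVert i) := by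
    rw [List.getElem?_tail]
    have hii : i - 1 + 1 = i := by omega
    rw [hii]
    exact stmt8_getVert_support w i hi2
  have h2 : w.support.tail[j - 1]? = some (w.getVert j) := by
    rw [List.getElem?_tail]
    have hjj : j - 1 + 1 = j := by omega
    rw [hjj]
    exact stmt8_getVert_support w j hj2
  have hb : i - 1 < w.support.tail.length := by omega
  have := (List.getElem?_inj hb hnd).mp (h1.trans (h ▸ h2.symm))
  omega

/-- Membership predicate for vertices allowed in the restricted graph. -/
def stmt8Ok {B : Type*} (C : Type*) (Vf : Finset B) [DecidableEq B] : B ⊕ C → Prop :=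
  Sum.elim (· ∈ Vf) fun _ => True

instance stmt8Ok.dec {B C : Type*} (Vf : Finset B) [DecidableEq B] :
    DecidablePred (stmt8Ok C Vf) := fun x =>
  match x with
  | Sum.inl b => inferInstanceAs (Decidable (b ∈ Vf))
  | Sum.inr _ => inferInstanceAs (Decidable True)

/-- The subgraph of the Tanner graph induced by restricting bits to `Vf`. -/
def stmt8H {B C : Type*} (adj : C → B → Prop) (Vf : Finset B) [DecidableEq B] :
    SimpleGraph (B ⊕ C) where
  Adj x y := (tannerGraph adj).Adj x y ∧ stmt8Ok C Vf x ∧ stmt8Ok C Vf y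
  symm := ⟨fun x y h => ⟨(tannerGraph adj).adj_symm h.1, h.2.2, h.2.1⟩⟩
  loopless := ⟨fun x h => (tannerGraph adj).loopless.irrefl x h.1⟩

instance tannerGraph.decAdj {B C : Type*} (adj : C → B → Prop) [∀ c b, Decidable (adj c b)] :
    DecidableRel (tannerGraph adj).Adj := fun x y =>
  match x, y with
  | Sum.inl b, Sum.inr c => inferInstanceAs (Decidable (adj c b))
  | Sum.inl _, Sum.inl _ => inferInstanceAs (Decidable False)
  | Sum.inr _, Sum.inr _ => inferInstanceAs (Decidable False)
  | Sum.inr c, Sum.inl b => inferInstanceAs (Decidable (adj c b))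

instance stmt8H.decAdj {B C : Type*} (adj : C → B → Prop) (Vf : Finset B) [DecidableEq B]
    [∀ c b, Decidable (adj c b)] : DecidableRel (stmt8H adj Vf).Adj := fun x y =>
  inferInstanceAs (Decidable ((tannerGraph adj).Adj x y ∧ stmt8Ok C Vf x ∧ stmt8Ok C Vf y))

variable {B C : Type*} (adj : C → B → Prop) (Vf : Finset B) [DecidableEq B]

lemma stmt8H_adj_il_ir (b : B) (c : C) :
    (stmt8H adj Vf).Adj (Sum.inl b) (Sum.inr c) ↔ adj c b ∧ b ∈ Vf := by
  show (adj c b ∧ _ ∧ _) ↔ _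
  simp [stmt8Ok]
lemma stmt8H_adj_ir_il (b : B) (c : C) :
    (stmt8H adj Vf).Adj (Sum.inr c) (Sum.inl b) ↔ adj c b ∧ b ∈ Vf := by
  show (adj c b ∧ _ ∧ _) ↔ _
  simp [stmt8Ok]
lemma stmt8H_adj_il_il (b b' : B) : ¬ (stmt8H adj Vf).Adj (Sum.inl b) (Sum.inl b') :=
  fun h => h.1
lemma stmt8H_adj_ir_ir (c c' : C) : ¬ (stmt8H adj Vf).Adj (Sum.inr c) (Sum.inr c') :=
  fun h => h.1

end Aux

/-- if every bit vertex has degree `s ≥ 2`, every check vertex has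
degree `w`, and the Tanner graph has girth `> 2·d̃`, then the associated parity
check matrix is `(d̃, s)`-sensitive: every nonzero `v` with `|v| ≤ d̃` violates
at least `s` checks. -/
theorem stmt8 {B C : Type*} [Fintype B] [Fintype C] [DecidableEq B] [DecidableEq C]
    (adj : C → B → Prop) [∀ c b, Decidable (adj c b)]
    (s w dt : ℕ) (hs : 2 ≤ s)
    (hdegB : ∀ b : B, (Finset.univ.filter (fun c : C => adj c b)).card = s)
    (hdegC : ∀ c : C, (Finset.univ.filter (fun b : B => adj c b)).card = w)
    (hgirth : (2 * dt : ℕ) < (tannerGraph adj).girth) :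
    ∀ v : B → ZMod 2, v ≠ 0 → hammingNorm v ≤ dt →
      s ≤ hammingNorm ((fun c b => if adj c b then (1 : ZMod 2) else 0 : Matrix C B (ZMod 2)) *ᵥ v) := by
  classical
  intro v hv hwt
  open Finset SimpleGraph in
  set M : Matrix C B (ZMod 2) := fun c b => if adj c b then 1 else 0 with hM
  set Vf : Finset B := Finset.univ.filter (fun b => v b ≠ 0) with hVf
  have hVfcard : Vf.card = hammingNorm v := rfl
  have hVfne : Vf.Nonempty := by
    obtain ⟨b, hb⟩ := Function.ne_iff.mp hv
    exact ⟨b, by simp [hVf]; exact hb⟩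
  set d : C → ℕ := fun c => (Vf.filter (fun b => adj c b)).card with hd
  have hzmod : ∀ x : ZMod 2, x ≠ 0 → x = 1 := by decide
  have hdalt : ∀ c, Vf.filter (fun b => adj c b)
      = Finset.univ.filter (fun b => adj c b ∧ v b ≠ 0) := by
    intro c
    ext b
    simp [hVf]
    tauto
  have hMv : ∀ c, (M *ᵥ v) c = (d c : ZMod 2) := by
    intro c
    calc (M *ᵥ v) c = ∑ b, (if adj c b then (1 : ZMod 2) else 0) * v b := rfl
    _ = ∑ b, (if adj c b ∧ v b ≠ 0 then (1 : ZMod 2) else 0) := by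
        apply Finset.sum_congr rfl
        intro b _
        by_cases h1 : adj c b <;> by_cases h2 : v b = 0 <;>
          simp [h1, h2, hzmod (v b)]
    _ = ((Finset.univ.filter (fun b => adj c b ∧ v b ≠ 0)).card : ZMod 2) := by
        rw [Finset.sum_boole]
    _ = (d c : ZMod 2) := by rw [← hdalt c]
  set W : Finset C := Finset.univ.filter (fun c => (M *ᵥ v) c ≠ 0) with hW
  have hWcard : hammingNorm (M *ᵥ v) = W.card := rfl
  have hWodd : ∀ c, c ∈ W ↔ ¬ (2 ∣ d c) := by
    intro c
    rw [hW]
    simp only [Finset.mem_filter, Finset.mem_univ, true_and, hMv c]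
    rw [Ne, ZMod.natCast_eq_zero_iff]
  set N : Finset C := Finset.univ.filter (fun c => 0 < d c) with hN
  have hsum : ∑ c, d c = s * Vf.card := by
    simp only [hd, Finset.card_filter]
    rw [Finset.sum_comm]
    calc ∑ b ∈ Vf, ∑ c : C, (if adj c b then 1 else 0)
        = ∑ b ∈ Vf, s := by
          apply Finset.sum_congr rfl
          intro b _
          rw [← hdegB b, Finset.card_filter]
      _ = s * Vf.card := by rw [Finset.sum_const, smul_eq_mul, mul_comm]
  have hstep3 : 2 * N.card ≤ W.card + s * Vf.card := by
    have h1 : ∑ _c ∈ N, 2 ≤ ∑ c ∈ N, ((if c ∈ W then 1 else 0) + d c) := by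
      apply Finset.sum_le_sum
      intro c hc
      rw [hN, Finset.mem_filter] at hc
      by_cases hcW : c ∈ W
      · simp only [hcW, if_pos]
        omega
      · have h2d : 2 ∣ d c := not_not.mp (fun h => hcW ((hWodd c).mpr h))
        simp only [hcW, if_neg, not_false_iff]
        omega
    rw [Finset.sum_const, Finset.sum_add_distrib, smul_eq_mul] at h1
    have h2 : ∑ c ∈ N, (if c ∈ W then 1 else 0) ≤ W.card := by
      calc ∑ c ∈ N, (if c ∈ W then 1 else 0)
          ≤ ∑ c : C, (if c ∈ W then 1 else 0) :=
            Finset.sum_le_sum_of_subset (Finset.subset_univ N)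
        _ = W.card := by
            rw [← Finset.card_filter, Finset.filter_mem_eq_inter, Finset.univ_inter]
    have h3 : ∑ c ∈ N, d c ≤ s * Vf.card :=
      hsum ▸ Finset.sum_le_sum_of_subset (Finset.subset_univ N)
    omega
  -- the restricted graph
  have hle : stmt8H adj Vf ≤ tannerGraph adj := fun _ _ h => h.1
  have hVfdt : Vf.card ≤ dt := hVfcard ▸ hwt
  obtain ⟨b0, hb0⟩ := hVfne
  have hacyc : (stmt8H adj Vf).IsAcyclic := by
    intro a wk hwk
    have hgle : (tannerGraph adj).egirth ≤ (wk.length : ℕ∞) := by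
      have := SimpleGraph.le_egirth.mp (le_refl (tannerGraph adj).egirth) a
        (wk.mapLe hle) (hwk.mapLe hle)
      simpa using this
    have hgle' : (tannerGraph adj).girth ≤ wk.length := by
      have := ENat.toNat_le_toNat hgle (by simp)
      simpa [SimpleGraph.girth] using this
    set ψ : ℕ → B := fun i =>
      ((wk.getVert i).getLeft?.getD (((wk.getVert (i+1)).getLeft?).getD b0)) with hψ
    have hedge : ∀ i, i < wk.length →
        (wk.getVert i = Sum.inl (ψ i) ∨ wk.getVert (i+1) = Sum.inl (ψ i)) ∧ ψ i ∈ Vf := by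
      intro i hi
      have hadj := wk.adj_getVert_succ hi
      rcases hx : wk.getVert i with b | c <;> rcases hy : wk.getVert (i+1) with b' | c'
      all_goals rw [hx, hy] at hadj
      · exact absurd hadj (stmt8H_adj_il_il adj Vf b b')
      · have hψi : ψ i = b := by rw [hψ]; simp [hx]
        rw [hψi]
        exact ⟨Or.inl rfl, ((stmt8H_adj_il_ir adj Vf b c').mp hadj).2⟩
      · have hψi : ψ i = b' := by rw [hψ]; simp [hx, hy]
        rw [hψi]
        exact ⟨Or.inr rfl, ((stmt8H_adj_ir_il adj Vf b' c).mp hadj).2⟩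
      · exact absurd hadj (stmt8H_adj_ir_ir adj Vf c c')
    have hL3 : 3 ≤ wk.length := hwk.three_le_length
    have hLle : wk.length ≤ 2 * Vf.card := by
      have hmaps : ∀ i ∈ Finset.range wk.length, ψ i ∈ Vf := by
        intro i hi
        rw [Finset.mem_range] at hi
        exact (hedge i hi).2
      have hfib : ∀ b ∈ Vf,
          ((Finset.range wk.length).filter (fun i => ψ i = b)).card ≤ 2 := by
        intro b _
        by_cases hSb : ((Finset.range wk.length).filter (fun i => ψ i = b)).Nonempty
        · obtain ⟨i0, hi0⟩ := hSb
          rw [Finset.mem_filter, Finset.mem_range] at hi0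
          have hk : ∃ k, 1 ≤ k ∧ k ≤ wk.length ∧ wk.getVert k = Sum.inl b := by
            rcases (hedge i0 hi0.1).1 with hx | hy
            · rw [hi0.2] at hx
              by_cases h0 : i0 = 0
              · refine ⟨wk.length, by omega, le_rfl, ?_⟩
                rw [Walk.getVert_length, ← wk.getVert_zero, ← h0, hx]
              · exact ⟨i0, by omega, by omega, hx⟩
            · rw [hi0.2] at hy
              exact ⟨i0 + 1, by omega, by omega, hy⟩
          obtain ⟨k, hk1, hk2, hk3⟩ := hk
          have hsub2 : (Finset.range wk.length).filter (fun i => ψ i = b)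
              ⊆ {k % wk.length, k - 1} := by
            intro j hj
            rw [Finset.mem_filter, Finset.mem_range] at hj
            rcases (hedge j hj.1).1 with hx | hy
            · rw [hj.2] at hx
              by_cases h0 : j = 0
              · have hgl : wk.getVert wk.length = Sum.inl b := by
                  rw [Walk.getVert_length, ← wk.getVert_zero, ← h0, hx]
                have hkL : wk.length = k := stmt8_cycle_getVert_inj hwk (by omega) le_rfl hk1 hk2
                  (hgl.trans hk3.symm)
                rw [Finset.mem_insert]
                left
                rw [← hkL, Nat.mod_self, h0]
              · have hjk : j = k := stmt8_cycle_getVert_inj hwk (by omega) (by omega) hk1 hk2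
                  (hx.trans hk3.symm)
                rw [Finset.mem_insert]
                left
                rw [hjk, Nat.mod_eq_of_lt (by omega)]
            · rw [hj.2] at hy
              have hjk : j + 1 = k := stmt8_cycle_getVert_inj hwk (by omega) (by omega) hk1 hk2
                (hy.trans hk3.symm)
              rw [Finset.mem_insert, Finset.mem_singleton]
              right
              omega
          calc ((Finset.range wk.length).filter (fun i => ψ i = b)).card
              ≤ ({k % wk.length, k - 1} : Finset ℕ).card := Finset.card_le_card hsub2
            _ ≤ 2 := (Finset.card_insert_le _ _).trans (by simp)
        · rw [Finset.not_nonempty_iff_eq_empty] at hSb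
          simp [hSb]
      have := Finset.card_le_mul_card_image_of_maps_to hmaps 2 hfib
      simpa using this
    omega
  -- edge count of H
  have hdeg1 : ∀ b : B, (stmt8H adj Vf).degree (Sum.inl b) = if b ∈ Vf then s else 0 := by
    intro b
    rw [SimpleGraph.degree, SimpleGraph.neighborFinset_eq_filter, Finset.card_filter,
      ← Finset.univ_disjSum_univ, Finset.sum_disjSum]
    have hz : ∀ b' : B, (if (stmt8H adj Vf).Adj (Sum.inl b) (Sum.inl b') then 1 else 0) = 0 :=
      fun b' => if_neg (stmt8H_adj_il_il adj Vf b b')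
    rw [Finset.sum_congr rfl (fun b' _ => hz b'), Finset.sum_const_zero, zero_add]
    by_cases hbV : b ∈ Vf
    · rw [if_pos hbV, ← hdegB b, Finset.card_filter]
      apply Finset.sum_congr rfl
      intro c _
      simp [stmt8H_adj_il_ir adj Vf b c, hbV]
    · rw [if_neg hbV]
      apply Finset.sum_eq_zero
      intro c _
      simp [stmt8H_adj_il_ir adj Vf b c, hbV]
  have hdeg2 : ∀ c : C, (stmt8H adj Vf).degree (Sum.inr c) = d c := by
    intro c
    rw [SimpleGraph.degree, SimpleGraph.neighborFinset_eq_filter, Finset.card_filter,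
      ← Finset.univ_disjSum_univ, Finset.sum_disjSum]
    have hz : ∀ c' : C, (if (stmt8H adj Vf).Adj (Sum.inr c) (Sum.inr c') then 1 else 0) = 0 :=
      fun c' => if_neg (stmt8H_adj_ir_ir adj Vf c c')
    rw [Finset.sum_congr rfl (fun c' _ => hz c'), Finset.sum_const_zero, add_zero]
    simp only [hd]
    rw [hdalt c, Finset.card_filter]
    apply Finset.sum_congr rfl
    intro b _
    have : b ∈ Vf ↔ v b ≠ 0 := by simp [hVf]
    simp only [stmt8H_adj_ir_il adj Vf b c, this]
  have hEcard : (stmt8H adj Vf).edgeFinset.card = s * Vf.card := by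
    have h2E := SimpleGraph.sum_degrees_eq_twice_card_edges (stmt8H adj Vf)
    rw [← Finset.univ_disjSum_univ, Finset.sum_disjSum] at h2E
    rw [Finset.sum_congr rfl (fun b _ => hdeg1 b), Finset.sum_congr rfl (fun c _ => hdeg2 c)]
      at h2E
    rw [Finset.sum_ite_mem, Finset.univ_inter, Finset.sum_const, smul_eq_mul, mul_comm,
      hsum] at h2E
    omega
  have hIso : (Finset.univ.filter (fun x : B ⊕ C => ∃ y, (stmt8H adj Vf).Adj x y)).card
      = Vf.card + N.card := by
    rw [Finset.card_filter, ← Finset.univ_disjSum_univ, Finset.sum_disjSum]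
    have hbpart : ∀ b : B, (∃ y, (stmt8H adj Vf).Adj (Sum.inl b) y) ↔ b ∈ Vf := by
      intro b
      constructor
      · rintro ⟨y, hy⟩
        rcases y with b' | c
        · exact absurd hy (stmt8H_adj_il_il adj Vf b b')
        · exact ((stmt8H_adj_il_ir adj Vf b c).mp hy).2
      · intro hbV
        obtain ⟨c, hc⟩ := Finset.card_pos.mp (by rw [hdegB b]; omega)
        rw [Finset.mem_filter] at hc
        exact ⟨Sum.inr c, (stmt8H_adj_il_ir adj Vf b c).mpr ⟨hc.2, hbV⟩⟩
    have hcpart : ∀ c : C, (∃ y, (stmt8H adj Vf).Adj (Sum.inr c) y) ↔ 0 < d c := by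
      intro c
      constructor
      · rintro ⟨y, hy⟩
        rcases y with b | c'
        · have := (stmt8H_adj_ir_il adj Vf b c).mp hy
          exact Finset.card_pos.mpr ⟨b, Finset.mem_filter.mpr ⟨this.2, this.1⟩⟩
        · exact absurd hy (stmt8H_adj_ir_ir adj Vf c c')
      · intro hdc
        obtain ⟨b, hb⟩ := Finset.card_pos.mp hdc
        rw [Finset.mem_filter] at hb
        exact ⟨Sum.inl b, (stmt8H_adj_ir_il adj Vf b c).mpr ⟨hb.2, hb.1⟩⟩
    congr 1
    · calc ∑ b : B, (if ∃ y, (stmt8H adj Vf).Adj (Sum.inl b) y then 1 else 0)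
          = ∑ b : B, (if b ∈ Vf then 1 else 0) :=
            Finset.sum_congr rfl (fun b _ => by simp only [hbpart b])
        _ = Vf.card := by
            rw [← Finset.card_filter, Finset.filter_mem_eq_inter, Finset.univ_inter]
    · calc ∑ c : C, (if ∃ y, (stmt8H adj Vf).Adj (Sum.inr c) y then 1 else 0)
          = ∑ c : C, (if 0 < d c then 1 else 0) :=
            Finset.sum_congr rfl (fun c _ => by simp only [hcpart c])
        _ = N.card := by rw [hN, Finset.card_filter]
  have hEne : (stmt8H adj Vf).edgeFinset.Nonempty := by
    rw [← Finset.card_pos, hEcard]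
    have := Finset.card_pos.mpr ⟨b0, hb0⟩
    positivity
  have hfb := stmt8_forest_bound (stmt8H adj Vf) hacyc hEne
  rw [hEcard, hIso] at hfb
  -- final arithmetic
  obtain ⟨k, hk⟩ : ∃ k, Vf.card = k + 1 :=
    ⟨Vf.card - 1, by have := Finset.card_pos.mpr ⟨b0, hb0⟩; omega⟩
  have hsk : 2 * k ≤ s * k := Nat.mul_le_mul_right k hs
  have hE : s * Vf.card = s * k + s := by rw [hk]; ring
  rw [hWcard]
  omega
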